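/- Let p be a prime, k ≥ 1 an integer, and n a positive integer with (p,k,n) ≠ (2,1,1). Then Res(Φ_{p^k·n}, Φ_n) = p^{φ(n)}, where φ is Euler's totient function. -/

import Mathlib

/-- The Sylvester-type matrix `A(f,g)` of two integer polynomials: its first
`deg g` columns contain the coefficients of `f, tf, ..., t^{deg g - 1} f` and its last
`deg f` columns contain the coefficients of `g, tg, ..., t^{deg f - 1} g`,
all expressed in the basis `1, t, ..., t^{deg f + deg g - 1}`. -/
noncomputable def sylvesterMatrix (f g : Polynomial ℤ) :
    Matrix (Fin (f.natDegree + g.natDegree)) (Fin (f.natDegree + g.natDegree)) ℤ :=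
  Matrix.of fun i j =>
    if (j : ℕ) < g.natDegree then (Polynomial.X ^ (j : ℕ) * f).coeff (i : ℕ)
    else (Polynomial.X ^ ((j : ℕ) - g.natDegree) * g).coeff (i : ℕ)

/-- The resultant `Res(f,g)` of two integer polynomials, as the determinant of the
Sylvester matrix. -/
noncomputable def res (f g : Polynomial ℤ) : ℤ := (sylvesterMatrix f g).det

open Polynomial Finset Matrix

private lemma prod_Ioi_eq_prod_ite {N : ℕ} (v : Fin N → ℂ) (i : Fin N) :
    ∏ j ∈ Finset.Ioi i, (v j - v i) = ∏ j, if i < j then v j - v i else 1 := by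
  rw [← Finset.prod_filter]
  congr 1
  ext j
  simp [Finset.mem_Ioi]

private lemma det_vandermonde_append {m2 m1 : ℕ} (β : Fin m2 → ℂ) (α : Fin m1 → ℂ) :
    (Matrix.vandermonde (Fin.append β α)).det =
      (Matrix.vandermonde β).det * (Matrix.vandermonde α).det *
        ∏ j, ∏ i, (α j - β i) := by
  have h1 : ∀ (i : Fin m2) (j : Fin m1), ((Fin.castAdd m1 i : Fin (m2 + m1)) < Fin.natAdd m2 j) := by
    intro i j
    simp only [Fin.lt_def, Fin.coe_castAdd, Fin.coe_natAdd]
    exact lt_of_lt_of_le i.isLt (Nat.le_add_right _ _)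
  have h2 : ∀ (j : Fin m1) (i : Fin m2), ¬ ((Fin.natAdd m2 j : Fin (m2 + m1)) < Fin.castAdd m1 i) := by
    intro j i
    simp only [Fin.lt_def, Fin.coe_castAdd, Fin.coe_natAdd]
    omega
  simp only [det_vandermonde]
  simp_rw [prod_Ioi_eq_prod_ite]
  rw [Fin.prod_univ_add]
  simp_rw [Fin.prod_univ_add]
  simp only [Fin.append_left, Fin.append_right, h1, if_true, h2, if_false,
    Finset.prod_mul_distrib, Finset.prod_const_one, one_mul]
  have hcc : ∀ (i i' : Fin m2),
      ((Fin.castAdd m1 i : Fin (m2+m1)) < Fin.castAdd m1 i') ↔ i < i' := by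
    intro i i'; simp only [Fin.lt_def, Fin.coe_castAdd]
  have hnn : ∀ (j j' : Fin m1),
      ((Fin.natAdd m2 j : Fin (m2+m1)) < Fin.natAdd m2 j') ↔ j < j' := by
    intro j j'; simp only [Fin.lt_def, Fin.coe_natAdd]
    omega
  simp_rw [hcc, hnn]
  rw [Finset.prod_comm (s := (univ : Finset (Fin m2))) (t := (univ : Finset (Fin m1)))]
  ring


private lemma res_eq_prod_eval (f g : Polynomial ℤ)
    (β : Fin g.natDegree → ℂ) (α : Fin f.natDegree → ℂ)
    (hg : g.map (Int.castRingHom ℂ) = ∏ i, (X - C (β i)))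
    (hf : f.map (Int.castRingHom ℂ) = ∏ j, (X - C (α j)))
    (hβ : Function.Injective β) (hα : Function.Injective α)
    (hd : ∀ j i, α j ≠ β i) :
    ((res f g : ℤ) : ℂ) = ∏ i, (f.map (Int.castRingHom ℂ)).eval (β i) := by
  classical
  set fc := f.map (Int.castRingHom ℂ) with hfc
  set gc := g.map (Int.castRingHom ℂ) with hgc
  set S : Matrix (Fin (f.natDegree + g.natDegree)) (Fin (f.natDegree + g.natDegree)) ℂ :=
    (sylvesterMatrix f g).map (Int.castRingHom ℂ) with hS
  set ee : (Fin g.natDegree ⊕ Fin f.natDegree) ≃ Fin (f.natDegree + g.natDegree) :=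
    finSumFinEquiv.trans (finCongr (Nat.add_comm g.natDegree f.natDegree)) with hee
  set w : (Fin g.natDegree ⊕ Fin f.natDegree) → ℂ := Sum.elim β α with hw
  set V : Matrix (Fin g.natDegree ⊕ Fin f.natDegree) (Fin g.natDegree ⊕ Fin f.natDegree) ℂ :=
    Matrix.of (fun a b => w a ^ ((ee b : Fin (f.natDegree + g.natDegree)) : ℕ)) with hV
  set S' := S.submatrix ee ee with hS'
  -- the column polynomial
  have hcol : ∀ (z : ℂ) (jj : Fin (f.natDegree + g.natDegree)),
      (∑ i : Fin (f.natDegree + g.natDegree), z ^ (i : ℕ) * S i jj) =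
        eval z ((if (jj : ℕ) < g.natDegree then X ^ (jj : ℕ) * f
          else X ^ ((jj : ℕ) - g.natDegree) * g).map (Int.castRingHom ℂ)) := by
    intro z jj
    set P : Polynomial ℤ := if (jj : ℕ) < g.natDegree then X ^ (jj : ℕ) * f
      else X ^ ((jj : ℕ) - g.natDegree) * g with hP
    have hdeg : P.natDegree < f.natDegree + g.natDegree := by
      by_cases hc : (jj : ℕ) < g.natDegree
      · have hPP : P = X ^ (jj : ℕ) * f := by rw [hP, if_pos hc]
        have h1 : (X ^ (jj : ℕ) * f).natDegree ≤ (jj : ℕ) + f.natDegree :=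
          le_trans natDegree_mul_le (by simp)
        rw [hPP]; omega
      · have hPP : P = X ^ ((jj : ℕ) - g.natDegree) * g := by rw [hP, if_neg hc]
        have h1 : (X ^ ((jj : ℕ) - g.natDegree) * g).natDegree ≤
            ((jj : ℕ) - g.natDegree) + g.natDegree := le_trans natDegree_mul_le (by simp)
        have := jj.isLt
        rw [hPP]; omega
    have hdeg' : (P.map (Int.castRingHom ℂ)).natDegree < f.natDegree + g.natDegree :=
      lt_of_le_of_lt natDegree_map_le hdeg
    have hSij : ∀ i : Fin (f.natDegree + g.natDegree), S i jj = ((P.coeff (i : ℕ) : ℤ) : ℂ) := by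
      intro i
      rw [hS, Matrix.map_apply, sylvesterMatrix, Matrix.of_apply, hP]
      split_ifs with hc <;> simp
    rw [eval_eq_sum_range' hdeg', ← Fin.sum_univ_eq_sum_range]
    refine Finset.sum_congr rfl fun i _ => ?_
    rw [hSij i, coeff_map]
    simp [mul_comm]
  have key : V * S' = Matrix.fromBlocks
      (Matrix.of fun i' i : Fin g.natDegree => eval (β i') fc * β i' ^ (i : ℕ))
      0 0
      (Matrix.of fun j' j : Fin f.natDegree => eval (α j') gc * α j' ^ (j : ℕ)) := by
    have hfzero : ∀ j, eval (α j) fc = 0 := by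
      intro j
      rw [hf, eval_prod]
      exact Finset.prod_eq_zero (Finset.mem_univ j) (by simp)
    have hgzero : ∀ i, eval (β i) gc = 0 := by
      intro i
      rw [hg, eval_prod]
      exact Finset.prod_eq_zero (Finset.mem_univ i) (by simp)
    have hmul : ∀ (a b : Fin g.natDegree ⊕ Fin f.natDegree),
        (V * S') a b = eval (w a) ((if ((ee b : Fin (f.natDegree + g.natDegree)) : ℕ) < g.natDegree
          then X ^ ((ee b : Fin (f.natDegree + g.natDegree)) : ℕ) * f
          else X ^ (((ee b : Fin (f.natDegree + g.natDegree)) : ℕ) - g.natDegree) * g).map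
            (Int.castRingHom ℂ)) := by
      intro a b
      rw [Matrix.mul_apply, ← hcol (w a) (ee b)]
      rw [← Equiv.sum_comp ee (fun i => w a ^ (i : ℕ) * S i (ee b))]
      rfl
    have heel : ∀ i : Fin g.natDegree,
        ((ee (Sum.inl i) : Fin (f.natDegree + g.natDegree)) : ℕ) = (i : ℕ) := by
      intro i; simp [hee]
    have heer : ∀ j : Fin f.natDegree,
        ((ee (Sum.inr j) : Fin (f.natDegree + g.natDegree)) : ℕ) = g.natDegree + (j : ℕ) := by
      intro j; simp [hee, Nat.add_comm]
    ext a b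
    rcases a with i' | j' <;> rcases b with i | j
    · rw [hmul, heel i, if_pos i.isLt]
      simp only [Polynomial.map_mul, Polynomial.map_pow, map_X, eval_mul, eval_pow, eval_X]
      simp [hw, mul_comm, hfc]
    · rw [hmul, heer j, if_neg (by omega), Nat.add_sub_cancel_left]
      simp only [Polynomial.map_mul, Polynomial.map_pow, map_X, eval_mul, eval_pow, eval_X]
      simp [hw, hgzero, hgc]
      exact Or.inr (hgzero i')
    · rw [hmul, heel i, if_pos i.isLt]
      simp only [Polynomial.map_mul, Polynomial.map_pow, map_X, eval_mul, eval_pow, eval_X]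
      simp [hw, hfzero, hfc]
      exact Or.inr (hfzero j')
    · rw [hmul, heer j, if_neg (by omega), Nat.add_sub_cancel_left]
      simp only [Polynomial.map_mul, Polynomial.map_pow, map_X, eval_mul, eval_pow, eval_X]
      simp [hw, mul_comm, hgc]
  -- determinants
  have hdetS : S.det = ((res f g : ℤ) : ℂ) := by
    rw [hS]
    have h := RingHom.map_det (Int.castRingHom ℂ) (sylvesterMatrix f g)
    rw [RingHom.mapMatrix_apply] at h
    rw [← h, res]
    rfl
  have hdetS' : S'.det = S.det := Matrix.det_submatrix_equiv_self ee S
  have happ : ∀ a, Fin.append β α (finSumFinEquiv a) = w a := by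
    rintro (i | j) <;> simp [hw, finSumFinEquiv_apply_left, finSumFinEquiv_apply_right, Fin.append_left, Fin.append_right]
  have hval : ∀ b, ((finSumFinEquiv b : Fin (g.natDegree + f.natDegree)) : ℕ)
      = ((ee b : Fin (f.natDegree + g.natDegree)) : ℕ) := by
    rintro (i | j)
    · simp [hee]
    · simp [hee, Nat.add_comm]
  have hV_det : V.det = (Matrix.vandermonde (Fin.append β α)).det := by
    rw [← Matrix.det_submatrix_equiv_self finSumFinEquiv (Matrix.vandermonde (Fin.append β α))]
    congr 1
    ext a b
    rw [hV]
    simp only [Matrix.submatrix_apply, Matrix.vandermonde, Matrix.of_apply]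
    rw [happ a, hval b]
  have happrod : ∀ j, (∏ i, (α j - β i)) = eval (α j) gc := by
    intro j; rw [hg, eval_prod]; simp
  have hA : (Matrix.of fun i' i : Fin g.natDegree => eval (β i') fc * β i' ^ (i : ℕ)).det
      = (∏ i, eval (β i) fc) * (Matrix.vandermonde β).det := by
    have : (Matrix.of fun i' i : Fin g.natDegree => eval (β i') fc * β i' ^ (i : ℕ))
        = Matrix.diagonal (fun i' => eval (β i') fc) * Matrix.vandermonde β := by
      ext i' i
      rw [Matrix.diagonal_mul]
      rfl
    rw [this, Matrix.det_mul, Matrix.det_diagonal]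
  have hD : (Matrix.of fun j' j : Fin f.natDegree => eval (α j') gc * α j' ^ (j : ℕ)).det
      = (∏ j, eval (α j) gc) * (Matrix.vandermonde α).det := by
    have : (Matrix.of fun j' j : Fin f.natDegree => eval (α j') gc * α j' ^ (j : ℕ))
        = Matrix.diagonal (fun j' => eval (α j') gc) * Matrix.vandermonde α := by
      ext j' j
      rw [Matrix.diagonal_mul]
      rfl
    rw [this, Matrix.det_mul, Matrix.det_diagonal]
  have hmain : V.det * S'.det
      = ((∏ i, eval (β i) fc) * (Matrix.vandermonde β).det)
        * ((∏ j, eval (α j) gc) * (Matrix.vandermonde α).det) := by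
    rw [← Matrix.det_mul, key, Matrix.det_fromBlocks_zero₂₁, hA, hD]
  have hVdet : V.det = (Matrix.vandermonde β).det * (Matrix.vandermonde α).det
      * (∏ j, eval (α j) gc) := by
    rw [hV_det, det_vandermonde_append]
    congr 1
    exact Finset.prod_congr rfl fun j _ => happrod j
  have hVb : (Matrix.vandermonde β).det ≠ 0 := (Matrix.det_vandermonde_ne_zero_iff).2 hβ
  have hVa : (Matrix.vandermonde α).det ≠ 0 := (Matrix.det_vandermonde_ne_zero_iff).2 hα
  have hEg : (∏ j, eval (α j) gc) ≠ 0 := by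
    rw [Finset.prod_ne_zero_iff]
    intro j _
    rw [← happrod j, Finset.prod_ne_zero_iff]
    exact fun i _ => sub_ne_zero.2 (hd j i)
  have h0 : (Matrix.vandermonde β).det * (Matrix.vandermonde α).det
      * (∏ j, eval (α j) gc) ≠ 0 := mul_ne_zero (mul_ne_zero hVb hVa) hEg
  rw [hVdet, hdetS', hdetS] at hmain
  apply mul_left_cancel₀ h0
  linear_combination hmain


private lemma prod_comp_surjective {G H : Type*} [Group G] [Group H] [Fintype G] [Fintype H]
    [DecidableEq H] (φ : G →* H) (hφ : Function.Surjective φ) (F : H → ℂ) :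
    ∏ u : G, F (φ u) = (∏ h : H, F h) ^ (Fintype.card G / Fintype.card H) := by
  have hfib1 : ∀ h : H, (Finset.univ.filter fun u : G => φ u = h).card
      = (Finset.univ.filter fun u : G => φ u = 1).card := by
    intro h
    obtain ⟨u0, hu0⟩ := hφ h
    apply Finset.card_bij (fun u _ => u0⁻¹ * u)
    · intro u hu
      simp only [Finset.mem_filter, Finset.mem_univ, true_and] at hu ⊢
      rw [_root_.map_mul, hu, _root_.map_inv, hu0, inv_mul_cancel]
    · intro u hu v hv huv
      exact mul_left_cancel huv
    · intro v hv
      simp only [Finset.mem_filter, Finset.mem_univ, true_and] at hv ⊢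
      exact ⟨u0 * v, by rw [_root_.map_mul, hv, hu0, mul_one], by group⟩
  have hcardG : Fintype.card G
      = Fintype.card H * (Finset.univ.filter fun u : G => φ u = 1).card := by
    rw [← Finset.card_univ (α := G),
      Finset.card_eq_sum_card_fiberwise (f := φ) (t := Finset.univ) (fun x _ => Finset.mem_univ _)]
    rw [Finset.sum_congr rfl fun h _ => hfib1 h, Finset.sum_const, Finset.card_univ, smul_eq_mul]
  have hfib : ∀ h : H, (Finset.univ.filter fun u : G => φ u = h).card
      = Fintype.card G / Fintype.card H := by
    intro h
    rw [hfib1 h, hcardG, Nat.mul_div_cancel_left _ Fintype.card_pos]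
  rw [← Finset.prod_fiberwise_of_maps_to (g := φ) (t := Finset.univ)
    (fun x _ => Finset.mem_univ _) (fun u => F (φ u))]
  rw [← Finset.prod_pow]
  refine Finset.prod_congr rfl fun h _ => ?_
  have hcg : ∀ u ∈ Finset.univ.filter (fun i => φ i = h), F (φ u) = F h := by
    intro u hu
    simp only [Finset.mem_filter] at hu
    rw [hu.2]
  rw [Finset.prod_congr rfl hcg, Finset.prod_const, hfib h]

private lemma primitiveRoots_eq_image {r : ℕ} [NeZero r] {x : ℂ} (h : IsPrimitiveRoot x r) :
    primitiveRoots r ℂ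
      = Finset.image (fun u : (ZMod r)ˣ => x ^ ((u : ZMod r).val)) Finset.univ := by
  have hr : 0 < r := NeZero.pos r
  ext ξ
  simp only [Finset.mem_image, Finset.mem_univ, true_and, mem_primitiveRoots hr]
  constructor
  · intro hξ
    rw [h.isPrimitiveRoot_iff] at hξ
    obtain ⟨i, hik, hi, hxi⟩ := hξ
    refine ⟨ZMod.unitOfCoprime i hi, ?_⟩
    rw [show ((ZMod.unitOfCoprime i hi : ZMod r)).val = i by
      simp [ZMod.unitOfCoprime, ZMod.val_natCast, Nat.mod_eq_of_lt hik]]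
    exact hxi
  · rintro ⟨u, rfl⟩
    exact h.pow_of_coprime _ (ZMod.val_coe_unit_coprime u)

private lemma inj_units_pow {r : ℕ} [NeZero r] {x : ℂ} (h : IsPrimitiveRoot x r) :
    Function.Injective (fun u : (ZMod r)ˣ => x ^ ((u : ZMod r).val)) := by
  intro u v huv
  have := h.pow_inj (ZMod.val_lt _) (ZMod.val_lt _) huv
  exact Units.ext (ZMod.val_injective r this)

private lemma Gf_eq_prod_R {m d : ℕ} (hm : 0 < m) (hd : 0 < d) (heven : Even m.totient) :
    ∏ ξ ∈ primitiveRoots m ℂ, (ξ ^ d - 1)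
      = ∏ e ∈ d.divisors, ∏ ω ∈ primitiveRoots e ℂ, (Polynomial.cyclotomic m ℂ).eval ω := by
  have hζd := Complex.isPrimitiveRoot_exp d hd.ne'
  have hζm := Complex.isPrimitiveRoot_exp m hm.ne'
  have hstep : ∀ ξ : ℂ, ξ ^ d - 1 = ∏ ω ∈ Polynomial.nthRootsFinset d (1 : ℂ), (ξ - ω) := by
    intro ξ
    have := congrArg (Polynomial.eval ξ) (Polynomial.X_pow_sub_one_eq_prod hd hζd)
    simpa [Polynomial.eval_prod] using this
  simp_rw [hstep]
  rw [Finset.prod_comm]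
  have hinner : ∀ ω : ℂ, ∏ ξ ∈ primitiveRoots m ℂ, (ξ - ω)
      = (Polynomial.cyclotomic m ℂ).eval ω := by
    intro ω
    rw [Polynomial.cyclotomic_eq_prod_X_sub_primitiveRoots hζm, Polynomial.eval_prod]
    have h1 : ∏ ξ ∈ primitiveRoots m ℂ, (ξ - ω)
        = ∏ ξ ∈ primitiveRoots m ℂ, (-1) * (ω - ξ) :=
      Finset.prod_congr rfl fun ξ _ => by ring
    rw [h1, Finset.prod_mul_distrib, Finset.prod_const, hζm.card_primitiveRoots,
      heven.neg_one_pow, one_mul]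
    simp
  simp_rw [hinner]
  rw [IsPrimitiveRoot.nthRoots_one_eq_biUnion_primitiveRoots, Finset.prod_biUnion]
  exact fun i _ j _ hij => IsPrimitiveRoot.disjoint hij

private lemma Gf_eq_pow {m d : ℕ} (hm : 0 < m) (hd : 0 < d) (hdm : d ∣ m)
    (heven : Even m.totient) :
    ∏ ξ ∈ primitiveRoots m ℂ, (ξ ^ d - 1)
      = (((Polynomial.cyclotomic (m / d) ℤ).eval 1 : ℤ) : ℂ)
          ^ (m.totient / (m / d).totient) := by
  haveI : NeZero m := ⟨hm.ne'⟩
  have hr0 : 0 < m / d := Nat.div_pos (Nat.le_of_dvd hm hdm) hd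
  haveI : NeZero (m / d) := ⟨hr0.ne'⟩
  have hmr : m = d * (m / d) := (Nat.mul_div_cancel' hdm).symm
  have hrm : m / d ∣ m := Nat.div_dvd_of_dvd hdm
  have hζ := Complex.isPrimitiveRoot_exp m hm.ne'
  have hη : IsPrimitiveRoot (Complex.exp (2 * Real.pi * Complex.I / m) ^ d) (m / d) :=
    hζ.pow hm hmr
  set ζ := Complex.exp (2 * Real.pi * Complex.I / m) with hζdef
  set η := ζ ^ d with hηdef
  rw [primitiveRoots_eq_image hζ, Finset.prod_image (fun u _ v _ h => inj_units_pow hζ h)]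
  have hcast : ∀ u : (ZMod m)ˣ, (ζ ^ (u : ZMod m).val) ^ d - 1
      = η ^ (((ZMod.unitsMap hrm u : ZMod (m / d))).val) - 1 := by
    intro u
    congr 1
    have h1 : (ζ ^ (u : ZMod m).val) ^ d = η ^ (u : ZMod m).val := by
      rw [hηdef, ← pow_mul, ← pow_mul, Nat.mul_comm]
    rw [h1]
    have h2 : ((ZMod.unitsMap hrm u : ZMod (m / d))).val = (u : ZMod m).val % (m / d) := by
      rw [ZMod.unitsMap_def]
      rw [Units.coe_map]
      simp only [MonoidHom.coe_coe, ZMod.castHom_apply]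
      rw [← ZMod.natCast_val, ZMod.val_natCast]
    rw [h2]
    conv_lhs => rw [← Nat.div_add_mod ((u : ZMod m).val) (m / d)]
    rw [pow_add, pow_mul, hη.pow_eq_one, one_pow, one_mul]
  simp_rw [hcast]
  rw [prod_comp_surjective (ZMod.unitsMap hrm) (ZMod.unitsMap_surjective hrm)
    (fun w => η ^ ((w : ZMod (m / d))).val - 1)]
  rw [ZMod.card_units_eq_totient, ZMod.card_units_eq_totient]
  have hinner : ∏ w : (ZMod (m / d))ˣ, (η ^ ((w : ZMod (m / d))).val - 1)
      = ∏ x ∈ primitiveRoots (m / d) ℂ, (x - 1) := by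
    rw [primitiveRoots_eq_image hη, Finset.prod_image (fun u _ v _ h => inj_units_pow hη h)]
  rw [hinner]
  have hE : ∏ x ∈ primitiveRoots (m / d) ℂ, (x - 1)
      = (-1) ^ (m / d).totient * (((Polynomial.cyclotomic (m / d) ℤ).eval 1 : ℤ) : ℂ) := by
    have h1 : (((Polynomial.cyclotomic (m / d) ℤ).eval 1 : ℤ) : ℂ)
        = (Polynomial.cyclotomic (m / d) ℂ).eval 1 := by
      rw [← Polynomial.map_cyclotomic_int (m / d) ℂ, Polynomial.eval_one_map]
      simp
    rw [h1, Polynomial.cyclotomic_eq_prod_X_sub_primitiveRoots hη, Polynomial.eval_prod]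
    have h2 : ∏ x ∈ primitiveRoots (m / d) ℂ, (x - 1)
        = ∏ x ∈ primitiveRoots (m / d) ℂ, (-1) * (1 - x) :=
      Finset.prod_congr rfl fun x _ => by ring
    rw [h2, Finset.prod_mul_distrib, Finset.prod_const, hη.card_primitiveRoots]
    simp
  rw [hE, mul_pow, ← pow_mul, Nat.mul_div_cancel' (Nat.totient_dvd_of_dvd hrm),
    heven.neg_one_pow, one_mul]

private lemma isPrimePow_aux {p k a : ℕ} (hp : p.Prime) (hk : 1 ≤ k)
    (hpp : IsPrimePow (p ^ k * a)) : ∃ i, a = p ^ i := by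
  obtain ⟨q, j, hq, hj, heq⟩ := hpp
  have hq' : q.Prime := hq.nat_prime
  have hpq : p = q := by
    have hpdvd : p ∣ q ^ j := by
      rw [heq]
      exact Dvd.dvd.mul_right (dvd_pow_self p (by omega)) a
    exact (Nat.prime_dvd_prime_iff_eq hp hq').1 (hp.dvd_of_dvd_pow hpdvd)
  have hadvd : a ∣ q ^ j := heq ▸ Dvd.intro_left _ rfl
  rw [← hpq] at hadvd
  obtain ⟨i, _, hia⟩ := (Nat.dvd_prime_pow hp).1 hadvd
  exact ⟨i, hia⟩

private lemma totient_prime_pow_mul {p n : ℕ} (hp : p.Prime) (hpn : p ∣ n) (hn : 0 < n) :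
    ∀ j : ℕ, (p ^ j * n).totient = p ^ j * n.totient := by
  intro j
  induction j with
  | zero => simp
  | succ i ih =>
    have h1 : p ^ (i + 1) * n = p * (p ^ i * n) := by ring
    have h2 : p ∣ p ^ i * n := Dvd.dvd.mul_left hpn _
    rw [h1, Nat.totient_mul_of_prime_of_dvd hp h2, ih]
    ring

private lemma prod_eval_cyclotomic (p k n : ℕ) (hp : p.Prime) (hk : 1 ≤ k) (hn : 0 < n)
    (h2 : 2 < p ^ k * n) :
    ∏ ζ ∈ primitiveRoots n ℂ, (Polynomial.cyclotomic (p ^ k * n) ℂ).eval ζ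
      = (p : ℂ) ^ n.totient := by
  classical
  haveI : Fact p.Prime := ⟨hp⟩
  set m := p ^ k * n with hmdef
  have hpk2 : 2 ≤ p ^ k := le_trans hp.two_le (Nat.le_self_pow (by omega) p)
  have hnm : n < m := by
    have := Nat.mul_le_mul_right n hpk2
    omega
  have hm0 : 0 < m := by omega
  haveI : NeZero m := ⟨hm0.ne'⟩
  haveI : NeZero (m : ℂ) := ⟨Nat.cast_ne_zero.2 hm0.ne'⟩
  have heven : Even m.totient := Nat.totient_even h2
  have hζm := Complex.isPrimitiveRoot_exp m hm0.ne'
  -- nonvanishing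
  have hRne : ∀ e, e ∣ n → (∏ ω ∈ primitiveRoots e ℂ, (Polynomial.cyclotomic m ℂ).eval ω) ≠ 0 := by
    intro e he
    have he0 : 0 < e := Nat.pos_of_dvd_of_pos he hn
    rw [Finset.prod_ne_zero_iff]
    intro ω hω h0
    have hpω : IsPrimitiveRoot ω e := (mem_primitiveRoots he0).1 hω
    have : IsPrimitiveRoot ω m := Polynomial.isRoot_cyclotomic_iff.1 h0
    have heq : e = m := hpω.unique this
    have := Nat.le_of_dvd hn he
    omega
  have hGne : ∀ d, d ∣ n → (∏ ξ ∈ primitiveRoots m ℂ, (ξ ^ d - 1)) ≠ 0 := by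
    intro d hd
    have hd0 : 0 < d := Nat.pos_of_dvd_of_pos hd hn
    rw [Finset.prod_ne_zero_iff]
    intro ξ hξ
    have hpξ : IsPrimitiveRoot ξ m := (mem_primitiveRoots hm0).1 hξ
    rw [sub_ne_zero]
    intro h1
    have : m ∣ d := (hpξ.pow_eq_one_iff_dvd d).1 h1
    have := Nat.le_of_dvd hd0 this
    have := Nat.le_of_dvd hn hd
    omega
  -- Möbius inversion
  have key := (ArithmeticFunction.prod_eq_iff_prod_pow_moebius_eq_on_of_nonzero
    (R := ℂ) {i : ℕ | i ∣ n} (fun a b hab hb => dvd_trans hab hb)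
    (f := fun e => if e ∣ n then ∏ ω ∈ primitiveRoots e ℂ, (Polynomial.cyclotomic m ℂ).eval ω
      else 1)
    (g := fun d => if d ∣ n then ∏ ξ ∈ primitiveRoots m ℂ, (ξ ^ d - 1) else 1)
    ?_ ?_).mp ?_ n hn (dvd_refl n)
  rotate_left
  · intro e _
    split_ifs with he
    · exact hRne e he
    · exact one_ne_zero
  · intro d _
    split_ifs with hd
    · exact hGne d hd
    · exact one_ne_zero
  · intro d hd0 hdn
    simp only [Set.mem_setOf_eq] at hdn
    rw [if_pos hdn]
    have hcg : ∀ i ∈ d.divisors,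
        (if i ∣ n then ∏ ω ∈ primitiveRoots i ℂ, (Polynomial.cyclotomic m ℂ).eval ω else 1)
          = ∏ ω ∈ primitiveRoots i ℂ, (Polynomial.cyclotomic m ℂ).eval ω := by
      intro i hi
      exact if_pos (dvd_trans (Nat.dvd_of_mem_divisors hi) hdn)
    rw [Finset.prod_congr rfl hcg]
    exact (Gf_eq_prod_R hm0 hd0 heven).symm
  -- evaluate the inverted formula
  rw [if_pos (dvd_refl n)] at key
  rw [← key]
  rw [Nat.prod_divisorsAntidiagonal
    (f := fun a b => (if b ∣ n then ∏ ξ ∈ primitiveRoots m ℂ, (ξ ^ b - 1) else 1)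
      ^ (ArithmeticFunction.moebius a))]
  have hterm : ∀ a ∈ n.divisors,
      (if n / a ∣ n then ∏ ξ ∈ primitiveRoots m ℂ, (ξ ^ (n / a) - 1) else 1)
        ^ (ArithmeticFunction.moebius a)
      = ((((Polynomial.cyclotomic (p ^ k * a) ℤ).eval 1 : ℤ) : ℂ)
          ^ (m.totient / (p ^ k * a).totient)) ^ (ArithmeticFunction.moebius a) := by
    intro a ha
    have han : a ∣ n := Nat.dvd_of_mem_divisors ha
    have ha0 : 0 < a := Nat.pos_of_mem_divisors ha
    have hna : n / a ∣ n := Nat.div_dvd_of_dvd han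
    have hna0 : 0 < n / a := Nat.div_pos (Nat.le_of_dvd hn han) ha0
    have hnam : n / a ∣ m := dvd_trans hna (Dvd.intro_left _ rfl)
    have hmd : m / (n / a) = p ^ k * a := by
      have h1 : (n / a) * (p ^ k * a) = m := by
        rw [hmdef, ← Nat.mul_assoc, Nat.mul_comm (n / a) (p ^ k), Nat.mul_assoc,
          Nat.div_mul_cancel han]
      exact Nat.div_eq_of_eq_mul_right hna0 h1.symm
    rw [if_pos hna, Gf_eq_pow hm0 hna0 hnam heven, hmd]
  rw [Finset.prod_congr rfl hterm]
  have haux : ∀ a ∈ n.divisors, a ≠ 1 → a ≠ p →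
      ((((Polynomial.cyclotomic (p ^ k * a) ℤ).eval 1 : ℤ) : ℂ)
        ^ (m.totient / (p ^ k * a).totient)) ^ (ArithmeticFunction.moebius a) = 1 := by
    intro a ha ha1 hap
    have ha0 : 0 < a := Nat.pos_of_mem_divisors ha
    by_cases hsf : Squarefree a
    · have hnpp : ¬ IsPrimePow (p ^ k * a) := by
        intro hpp
        obtain ⟨i, rfl⟩ := isPrimePow_aux hp hk hpp
        have hi2 : 2 ≤ i := by
          rcases i with _ | _ | i
          · simp at ha1
          · rw [pow_one] at hap; exact absurd rfl hap
          · omega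
        have hdvd : p * p ∣ p ^ i := by
          rw [← pow_two]
          exact pow_dvd_pow p hi2
        have := hsf p hdvd
        rw [Nat.isUnit_iff] at this
        exact hp.ne_one this
      have harg : ∀ {q : ℕ}, q.Prime → ∀ j : ℕ, q ^ j ≠ p ^ k * a := by
        intro q hq j hje
        rcases Nat.eq_zero_or_pos j with rfl | hj0
        · rw [pow_zero] at hje
          have h2a := Nat.mul_le_mul hpk2 ha0
          omega
        · exact hnpp ⟨q, j, hq.prime, hj0, hje⟩
      rw [Polynomial.eval_one_cyclotomic_not_prime_pow harg]
      simp
    · rw [ArithmeticFunction.moebius_eq_zero_of_not_squarefree hsf, zpow_zero]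
  have hterm1 : ((((Polynomial.cyclotomic (p ^ k * 1) ℤ).eval 1 : ℤ) : ℂ)
      ^ (m.totient / (p ^ k * 1).totient)) ^ (ArithmeticFunction.moebius 1)
      = (p : ℂ) ^ (m.totient / (p ^ k).totient) := by
    rw [ArithmeticFunction.moebius_apply_one, zpow_one, Nat.mul_one]
    have hc : (Polynomial.cyclotomic (p ^ k) ℤ).eval 1 = p := by
      have h := Polynomial.eval_one_cyclotomic_prime_pow (R := ℤ) (p := p) (k - 1)
      rw [show k - 1 + 1 = k by omega] at h
      exact h
    rw [hc]
    push_cast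
    ring
  by_cases hpn : p ∣ n
  · -- case p ∣ n
    have hsub : ({1, p} : Finset ℕ) ⊆ n.divisors := by
      intro x hx
      simp only [Finset.mem_insert, Finset.mem_singleton] at hx
      rcases hx with rfl | rfl
      · exact Nat.one_mem_divisors.2 hn.ne'
      · exact Nat.mem_divisors.2 ⟨hpn, hn.ne'⟩
    rw [← Finset.prod_subset hsub (fun x hx hx' => by
      simp only [Finset.mem_insert, Finset.mem_singleton, not_or] at hx'
      exact haux x hx hx'.1 hx'.2)]
    rw [Finset.prod_insert (by
      simp only [Finset.mem_singleton]
      exact fun h => hp.ne_one h.symm), Finset.prod_singleton]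
    rw [hterm1]
    -- term at p
    rw [ArithmeticFunction.moebius_apply_prime hp, _root_.zpow_neg, zpow_one]
    rw [show p ^ k * p = p ^ (k + 1) from (pow_succ p k).symm]
    have hcp : (Polynomial.cyclotomic (p ^ (k + 1)) ℤ).eval 1 = p :=
      Polynomial.eval_one_cyclotomic_prime_pow (R := ℤ) (p := p) k
    rw [hcp]
    -- arithmetic of exponents
    have hφm : m.totient = p ^ k * n.totient := totient_prime_pow_mul hp hpn hn k
    obtain ⟨s, hs⟩ : (p - 1) ∣ n.totient := by
      have h := Nat.totient_dvd_of_dvd hpn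
      rwa [Nat.totient_prime hp] at h
    have hppos : 0 < p ^ (k - 1) * (p - 1) := by
      have := hp.two_le
      exact Nat.mul_pos (pow_pos hp.pos _) (by omega)
    have hppos' : 0 < p ^ k * (p - 1) := by
      have := hp.two_le
      exact Nat.mul_pos (pow_pos hp.pos _) (by omega)
    have ht1 : m.totient / (p ^ k).totient = p * s := by
      rw [hφm, hs, Nat.totient_prime_pow hp (by omega : 0 < k)]
      have he : p ^ k * ((p - 1) * s) = (p ^ (k - 1) * (p - 1)) * (p * s) := by
        rw [show p ^ k = p ^ (k - 1) * p by
          rw [← pow_succ]; congr 1; omega]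
        ring
      rw [he, Nat.mul_div_cancel_left _ hppos]
    have htp : m.totient / (p ^ (k + 1)).totient = s := by
      rw [hφm, hs, Nat.totient_prime_pow hp (by omega : 0 < k + 1)]
      have he : p ^ k * ((p - 1) * s) = (p ^ (k + 1 - 1) * (p - 1)) * s := by
        simp only [Nat.add_sub_cancel]
        ring
      rw [he, Nat.mul_div_cancel_left _ (by simpa using hppos')]
    rw [ht1, htp]
    have hpmul : p * s = n.totient + s := by
      rw [hs, Nat.sub_one_mul]
      have hle : s ≤ p * s := Nat.le_mul_of_pos_left s hp.pos
      omega
    rw [hpmul, pow_add]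
    have hpne : (p : ℂ) ^ s ≠ 0 := pow_ne_zero _ (Nat.cast_ne_zero.2 hp.pos.ne')
    push_cast
    field_simp
  · -- case p ∤ n
    rw [Finset.prod_eq_single 1 (fun b hb hb1 =>
        haux b hb hb1 (fun hbp => hpn (hbp ▸ Nat.dvd_of_mem_divisors hb)))
      (fun h1 => absurd (Nat.one_mem_divisors.2 hn.ne') h1)]
    rw [hterm1]
    have hco : Nat.Coprime (p ^ k) n :=
      Nat.Coprime.pow_left k ((Nat.Prime.coprime_iff_not_dvd hp).2 hpn)
    have ht : m.totient / (p ^ k).totient = n.totient := by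
      rw [hmdef, Nat.totient_mul hco,
        Nat.mul_div_cancel_left _ (Nat.totient_pos.2 (pow_pos hp.pos k))]
    rw [ht]


/-- Theorem 4.5 (d), equation (4.25): `Res(Φ_{p^k n}, Φ_n) = p^{φ(n)}` for a prime `p`,
`k ≥ 1` and `n ≥ 1` with `(p,k,n) ≠ (2,1,1)`. -/
theorem resultant_cyclotomic_prime_pow_mul (p k n : ℕ) (hp : p.Prime) (hk : 1 ≤ k)
    (hn : 0 < n) (h : ¬ (p = 2 ∧ k = 1 ∧ n = 1)) :
    res (Polynomial.cyclotomic (p ^ k * n) ℤ) (Polynomial.cyclotomic n ℤ)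
      = (p : ℤ) ^ Nat.totient n := by
  classical
  set m := p ^ k * n with hmdef
  have hpk2 : 2 ≤ p ^ k := le_trans hp.two_le (Nat.le_self_pow (by omega) p)
  have hm2 : 2 ≤ m := by
    have := Nat.mul_le_mul hpk2 hn
    omega
  have hm0 : 0 < m := by omega
  have hnm : n < m := by
    have := Nat.mul_le_mul_right n hpk2
    omega
  have h2 : 2 < m := by
    rcases Nat.lt_or_ge 2 m with h' | h'
    · exact h'
    · exfalso
      have hm2' : m = 2 := le_antisymm h' hm2
      have hn1 : n = 1 := by
        rcases Nat.lt_or_ge n 2 with h1 | h1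
        · omega
        · exfalso
          have := Nat.mul_le_mul hpk2 h1
          omega
      have hpk : p ^ k = 2 := by
        rw [hmdef, hn1, Nat.mul_one] at hm2'
        exact hm2'
      have hp2 : p = 2 := by
        have hdvd : p ∣ 2 := hpk ▸ dvd_pow_self p (by omega : k ≠ 0)
        exact (Nat.prime_dvd_prime_iff_eq hp Nat.prime_two).1 hdvd
      have hk1 : k = 1 := by
        rw [hp2] at hpk
        have := Nat.pow_right_injective (le_refl 2) (hpk.trans (pow_one 2).symm)
        exact this
      exact h ⟨hp2, hk1, hn1⟩
  have hζm := Complex.isPrimitiveRoot_exp m hm0.ne'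
  have hζn := Complex.isPrimitiveRoot_exp n hn.ne'
  have hcardn : (primitiveRoots n ℂ).card = (Polynomial.cyclotomic n ℤ).natDegree := by
    rw [Polynomial.natDegree_cyclotomic, hζn.card_primitiveRoots]
  have hcardm : (primitiveRoots m ℂ).card = (Polynomial.cyclotomic m ℤ).natDegree := by
    rw [Polynomial.natDegree_cyclotomic, hζm.card_primitiveRoots]
  set en : Fin (Polynomial.cyclotomic n ℤ).natDegree ≃ {x // x ∈ primitiveRoots n ℂ} :=
    (finCongr hcardn.symm).trans (primitiveRoots n ℂ).equivFin.symm with hen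
  set em : Fin (Polynomial.cyclotomic m ℤ).natDegree ≃ {x // x ∈ primitiveRoots m ℂ} :=
    (finCongr hcardm.symm).trans (primitiveRoots m ℂ).equivFin.symm with hem
  set β : Fin (Polynomial.cyclotomic n ℤ).natDegree → ℂ := fun i => ((en i : ℂ)) with hβdef
  set α : Fin (Polynomial.cyclotomic m ℤ).natDegree → ℂ := fun j => ((em j : ℂ)) with hαdef
  have hβinj : Function.Injective β := fun i j hij => en.injective (Subtype.ext hij)
  have hαinj : Function.Injective α := fun i j hij => em.injective (Subtype.ext hij)
  have hprodg : (Polynomial.cyclotomic n ℤ).map (Int.castRingHom ℂ)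
      = ∏ i, (Polynomial.X - Polynomial.C (β i)) := by
    rw [Polynomial.map_cyclotomic_int, Polynomial.cyclotomic_eq_prod_X_sub_primitiveRoots hζn,
      ← Finset.prod_coe_sort]
    exact (Equiv.prod_comp en (fun x : {x // x ∈ primitiveRoots n ℂ} =>
      Polynomial.X - Polynomial.C (x : ℂ))).symm
  have hprodf : (Polynomial.cyclotomic m ℤ).map (Int.castRingHom ℂ)
      = ∏ j, (Polynomial.X - Polynomial.C (α j)) := by
    rw [Polynomial.map_cyclotomic_int, Polynomial.cyclotomic_eq_prod_X_sub_primitiveRoots hζm,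
      ← Finset.prod_coe_sort]
    exact (Equiv.prod_comp em (fun x : {x // x ∈ primitiveRoots m ℂ} =>
      Polynomial.X - Polynomial.C (x : ℂ))).symm
  have hd : ∀ j i, α j ≠ β i := by
    intro j i hij
    have h1 : IsPrimitiveRoot (α j) m := (mem_primitiveRoots hm0).1 (em j).2
    have h2' : IsPrimitiveRoot (β i) n := (mem_primitiveRoots hn).1 (en i).2
    rw [hij] at h1
    have := h1.unique h2'
    omega
  have hres := res_eq_prod_eval (Polynomial.cyclotomic m ℤ) (Polynomial.cyclotomic n ℤ)
    β α hprodg hprodf hβinj hαinj hd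
  have hprodeval : ∏ i, ((Polynomial.cyclotomic m ℤ).map (Int.castRingHom ℂ)).eval (β i)
      = ∏ ζ ∈ primitiveRoots n ℂ, (Polynomial.cyclotomic m ℂ).eval ζ := by
    rw [Polynomial.map_cyclotomic_int,
      ← Finset.prod_coe_sort (primitiveRoots n ℂ) (fun x => (Polynomial.cyclotomic m ℂ).eval x)]
    exact Equiv.prod_comp en (fun x : {x // x ∈ primitiveRoots n ℂ} =>
      (Polynomial.cyclotomic m ℂ).eval (x : ℂ))
  rw [hprodeval, prod_eval_cyclotomic p k n hp hk hn h2] at hres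
  have hfinal : ((res (Polynomial.cyclotomic m ℤ) (Polynomial.cyclotomic n ℤ) : ℤ) : ℂ)
      = (((p : ℤ) ^ n.totient : ℤ) : ℂ) := by
    rw [hres]
    push_cast
    ring
  exact_mod_cast hfinal
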